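/- Under the hypotheses and notation of the previous lemma (parameters r, p, θ, β_j with β_j > 0; 0 < δ ≤ (1/2)min_j{β_j r_j}; φ_j positive, strictly increasing, C¹, with t^{−r_j}φ_j(t) ∈ 𝓛^{θ_j}, φ_j(t)t^{−r_j+δ} increasing and φ_j(t)t^{−r_j−δ} decreasing; σ(t) = inf{max_j t^{−1/p_j}φ_j(δ_j) : δ_j > 0, ∏ δ_j = t}; and δ_j(t) the C¹ functions with ∏_j δ_j(t) = t and σ(t) = t^{−1/p_j}φ_j(δ_j(t))), for every j = 1,…,n there holds (∫₀^∞ [φ_j(δ_j(t))/δ_j(t)^{r_j}]^{θ_j} dt/t)^{1/θ_j} ≤ c ‖t^{−r_j}φ_j(t)‖_{𝓛^{θ_j}}, where c depends only on δ, r_j, p_j and n. -/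

import Mathlib

open MeasureTheory Set
open scoped ENNReal NNReal BigOperators

noncomputable section

/-- The measure `du/u` on `(0,∞)`. -/
def muLog : Measure ℝ :=
  (volume.restrict (Set.Ioi (0:ℝ))).withDensity fun u => ENNReal.ofReal u⁻¹

/-- The `𝓛^θ` norm of an `ℝ≥0∞`-valued function on `(0,∞)` (with respect to `du/u`),
for `θ ∈ [1,∞]`; for `θ = ∞` it is the essential supremum. -/
def calLE (θ : ℝ≥0∞) (g : ℝ → ℝ≥0∞) : ℝ≥0∞ :=
  if θ = ∞ then essSup g muLog
  else (∫⁻ t, g t ^ θ.toReal ∂muLog) ^ (1 / θ.toReal)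

/-- The `𝓛^θ` norm of a real-valued function on `(0,∞)`. -/
def calL (θ : ℝ≥0∞) (g : ℝ → ℝ) : ℝ≥0∞ :=
  calLE θ fun t => ENNReal.ofReal |g t|

/-- The distribution function `λ_f(y) = |{x : |f x| > y}|`. -/
def distFn {n : ℕ} (f : (Fin n → ℝ) → ℝ) (y : ℝ) : ℝ≥0∞ :=
  volume {x | y < |f x|}

/-- `f ∈ S₀(ℝⁿ)`: measurable with finite distribution function for all `y > 0`. -/
def MemS0 {n : ℕ} (f : (Fin n → ℝ) → ℝ) : Prop :=
  Measurable f ∧ ∀ y : ℝ, 0 < y → distFn f y < ∞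

/-- The non-increasing rearrangement `f*`. -/
def rearr {n : ℕ} (f : (Fin n → ℝ) → ℝ) (t : ℝ) : ℝ :=
  sInf {y : ℝ | 0 ≤ y ∧ distFn f y ≤ ENNReal.ofReal t}

/-- The real-valued `L^p(ℝⁿ)` norm. -/
def lpR {n : ℕ} (p : ℝ) (f : (Fin n → ℝ) → ℝ) : ℝ :=
  (eLpNorm f (ENNReal.ofReal p) volume).toReal

/-- The difference of degree `k` in direction `j` with step `h`:
`Δ_j^k(h) f (x) = ∑ (-1)^{k-i} C(k,i) f(x + i h e_j)`. -/
def diffOp {n : ℕ} (j : Fin n) (k : ℕ) (h : ℝ) (f : (Fin n → ℝ) → ℝ) :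
    (Fin n → ℝ) → ℝ :=
  fun x => ∑ i ∈ Finset.range (k + 1),
    (-1 : ℝ) ^ (k - i) * (k.choose i : ℝ) * f (x + ((i : ℝ) * h) • (Pi.single j 1 : Fin n → ℝ))

/-- The modulus of continuity `ω_j^k(f;δ)_p = sup_{0<h≤δ} ‖Δ_j^k(h) f‖_p`. -/
def modCont {n : ℕ} (j : Fin n) (k : ℕ) (p : ℝ) (f : (Fin n → ℝ) → ℝ) (δ : ℝ) : ℝ :=
  sSup ((fun h => lpR p (diffOp j k h f)) '' Set.Ioc 0 δ)

/-- The directional Besov seminorm `‖f‖_{b^r_{p,θ;j}}` with difference order `k`. -/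
def besov {n : ℕ} (j : Fin n) (k : ℕ) (r p : ℝ) (θ : ℝ≥0∞)
    (f : (Fin n → ℝ) → ℝ) : ℝ≥0∞ :=
  calL θ fun h => h ^ (-r) * lpR p (diffOp j k h f)

/-- The Lorentz quasinorm `‖f‖_{q,s} = ‖t^{1/q} f*(t)‖_{𝓛^s}`. -/
def lorentz {n : ℕ} (q : ℝ) (s : ℝ≥0∞) (f : (Fin n → ℝ) → ℝ) : ℝ≥0∞ :=
  calL s fun t => t ^ (1 / q) * rearr f t

/-- The norm in the sum space `L¹ + L^{p₀}`. -/
def sumNormE {n : ℕ} (p₀ : ℝ) (f : (Fin n → ℝ) → ℝ) : ℝ≥0∞ :=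
  ⨅ (g : (Fin n → ℝ) → ℝ) (h : (Fin n → ℝ) → ℝ) (_ : f = g + h),
    eLpNorm g 1 volume + eLpNorm h (ENNReal.ofReal p₀) volume

/-- The function `σ(t) = inf { max_j t^{-1/p_j} φ_j(δ_j) : δ_j > 0, ∏ δ_j = t }`. -/
def sigmaFn {n : ℕ} (pp : Fin n → ℝ) (φ : Fin n → ℝ → ℝ) (t : ℝ) : ℝ :=
  sInf {a : ℝ | ∃ d : Fin n → ℝ, (∀ j, 0 < d j) ∧ (∏ j, d j) = t ∧
    a = ⨆ j, t ^ (-(pp j)⁻¹) * φ j (d j)}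

-- Auxiliary lemmas
lemma muLog_lintegral (g : ℝ → ℝ≥0∞) :
    ∫⁻ t, g t ∂muLog = ∫⁻ t in Set.Ioi (0:ℝ), ENNReal.ofReal t⁻¹ * g t := by
  rw [muLog, lintegral_withDensity_eq_lintegral_mul_non_measurable _
    (by fun_prop) (by filter_upwards with x using ENNReal.ofReal_lt_top)]
  rfl

lemma muLog_compl_Ioi : muLog (Set.Ioi (0:ℝ))ᶜ = 0 := by
  rw [muLog, withDensity_apply _ (measurableSet_Ioi.compl),
    Measure.restrict_restrict (measurableSet_Ioi.compl)]
  rw [show (Set.Ioi (0:ℝ))ᶜ ∩ Set.Ioi 0 = ∅ from (by simp [Set.eq_empty_iff_forall_notMem] : _)]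
  simp

lemma muLog_ae_pos : ∀ᵐ t ∂muLog, 0 < t := by
  rw [ae_iff]
  refine measure_mono_null (fun x hx => ?_) muLog_compl_Ioi
  simpa using hx


lemma muLog_pos_of_mem_open {V : Set ℝ} (hV : IsOpen V) {u : ℝ} (hu : u ∈ V) (hu0 : 0 < u) :
    0 < muLog V := by
  obtain ⟨ε, hε, hball⟩ := Metric.isOpen_iff.1 hV u hu
  set b : ℝ := u + min (ε/2) (u/2) with hb
  set a : ℝ := u - min (ε/2) (u/2) with ha
  have hε' : 0 < min (ε/2) (u/2) := lt_min (by linarith) (by linarith)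
  have hab : 0 < a := by
    have := min_le_right (ε/2) (u/2); simp only [ha]; linarith
  have hab2 : a < b := by simp only [ha, hb]; linarith
  have hsub : Set.Ioo a b ⊆ V := by
    intro x hx
    apply hball
    rw [Real.ball_eq_Ioo]
    have := min_le_left (ε/2) (u/2)
    obtain ⟨hx1, hx2⟩ := hx
    constructor <;> simp only [ha, hb] at hx1 hx2 ⊢ <;> linarith
  have key : 0 < muLog (Set.Ioo a b) := by
    rw [muLog, withDensity_apply _ measurableSet_Ioo,
      Measure.restrict_restrict measurableSet_Ioo,
      show Set.Ioo a b ∩ Set.Ioi 0 = Set.Ioo a b from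
        Set.inter_eq_left.2 (fun x hx => lt_trans hab hx.1)]
    have hlow : ENNReal.ofReal b⁻¹ * volume (Set.Ioo a b) ≤ ∫⁻ x in Set.Ioo a b, ENNReal.ofReal x⁻¹ := by
      rw [← setLIntegral_const]
      refine setLIntegral_mono (by fun_prop) (fun x hx => ?_)
      exact ENNReal.ofReal_le_ofReal (by
        apply inv_anti₀ (lt_trans hab hx.1) (le_of_lt hx.2))
    refine lt_of_lt_of_le ?_ hlow
    rw [Real.volume_Ioo]
    exact ENNReal.mul_pos (by simp [ENNReal.ofReal_pos]; positivity)
      (by simp [ENNReal.ofReal_pos]; linarith)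
  exact lt_of_lt_of_le key (measure_mono hsub)

lemma le_essSup_muLog (F : ℝ → ℝ≥0∞) (hF : ContinuousOn F (Set.Ioi 0)) {u : ℝ} (hu : 0 < u) :
    F u ≤ essSup F muLog := by
  by_contra h
  push_neg at h
  have hVopen : IsOpen (Set.Ioi (0:ℝ) ∩ F ⁻¹' Set.Ioi (essSup F muLog)) :=
    hF.isOpen_inter_preimage isOpen_Ioi isOpen_Ioi
  have h1 : 0 < muLog (Set.Ioi (0:ℝ) ∩ F ⁻¹' Set.Ioi (essSup F muLog)) :=
    muLog_pos_of_mem_open hVopen ⟨hu, h⟩ hu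
  have h2 : muLog (Set.Ioi (0:ℝ) ∩ F ⁻¹' Set.Ioi (essSup F muLog)) = 0 := by
    refine measure_mono_null (fun x hx => ?_) (ae_iff.1 (ENNReal.ae_le_essSup F))
    exact not_le.2 hx.2
  rw [h2] at h1; exact lt_irrefl _ h1


lemma lintegral_image_eq_lintegral_abs_deriv_mul' {s : Set ℝ} {f f' : ℝ → ℝ}
    (hs : MeasurableSet s) (hf' : ∀ x ∈ s, HasDerivWithinAt f (f' x) s x)
    (hf : Set.InjOn f s) (g : ℝ → ℝ≥0∞) :
    ∫⁻ x in f '' s, g x = ∫⁻ x in s, ENNReal.ofReal |f' x| * g (f x) := by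
  simpa only [ContinuousLinearMap.det_toSpanSingleton] using
    lintegral_image_eq_lintegral_abs_det_fderiv_mul volume hs
      (fun x hx => (hf' x hx).hasFDerivWithinAt) hf g

lemma key_cov (dl : ℝ → ℝ) (a : ℝ) (ha : 0 < a)
    (hpos : ∀ t, 0 < t → 0 < dl t)
    (hcd : ContDiffOn ℝ 1 dl (Set.Ioi 0))
    (hinj : Set.InjOn dl (Set.Ioi 0))
    (himg : dl '' Set.Ioi 0 = Set.Ioi 0)
    (hderiv : ∀ t, 0 < t → a * dl t / t ≤ deriv dl t)
    (G : ℝ → ℝ≥0∞) :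
    ∫⁻ t, G (dl t) ∂muLog ≤ ENNReal.ofReal a⁻¹ * ∫⁻ u, G u ∂muLog := by
  have hdiff : ∀ t ∈ Set.Ioi (0:ℝ), HasDerivWithinAt dl (deriv dl t) (Set.Ioi 0) t := fun t ht =>
    (((hcd.differentiableOn one_ne_zero).differentiableAt (Ioi_mem_nhds ht)).hasDerivAt).hasDerivWithinAt
  rw [muLog_lintegral, muLog_lintegral]
  have himage := lintegral_image_eq_lintegral_abs_deriv_mul' measurableSet_Ioi hdiff hinj
      (fun u => ENNReal.ofReal u⁻¹ * G u)
  rw [himg] at himage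
  rw [himage]
  calc ∫⁻ t in Set.Ioi 0, ENNReal.ofReal t⁻¹ * G (dl t)
      ≤ ∫⁻ t in Set.Ioi 0, ENNReal.ofReal a⁻¹ *
          (ENNReal.ofReal |deriv dl t| * (ENNReal.ofReal (dl t)⁻¹ * G (dl t))) := by
        refine lintegral_mono_ae (((ae_restrict_mem measurableSet_Ioi)).mono (fun t ht => ?_))
        have ht0 : (0:ℝ) < t := ht
        have hdl0 : 0 < dl t := hpos t ht0
        have hd0 : 0 < deriv dl t := lt_of_lt_of_le (by positivity) (hderiv t ht0)
        rw [abs_of_pos hd0, ← mul_assoc, ← mul_assoc, ← ENNReal.ofReal_mul (by positivity),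
          ← ENNReal.ofReal_mul (by positivity)]
        refine mul_le_mul_of_nonneg_right (ENNReal.ofReal_le_ofReal ?_) (by simp)
        have h1 : a * dl t / t ≤ deriv dl t := hderiv t ht0
        have : t⁻¹ ≤ a⁻¹ * (a * dl t / t) * (dl t)⁻¹ := by
          rw [show a⁻¹ * (a * dl t / t) * (dl t)⁻¹ = (a⁻¹ * a) * (dl t * (dl t)⁻¹) / t by ring]
          rw [inv_mul_cancel₀ (ne_of_gt ha), mul_inv_cancel₀ (ne_of_gt hdl0)]
          simp
        calc t⁻¹ ≤ a⁻¹ * (a * dl t / t) * (dl t)⁻¹ := this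
          _ ≤ a⁻¹ * deriv dl t * (dl t)⁻¹ := by
              apply mul_le_mul_of_nonneg_right _ (by positivity)
              exact mul_le_mul_of_nonneg_left h1 (by positivity)
    _ = ENNReal.ofReal a⁻¹ * ∫⁻ t in Set.Ioi 0,
          ENNReal.ofReal |deriv dl t| * (ENNReal.ofReal (dl t)⁻¹ * G (dl t)) :=
        lintegral_const_mul' _ _ ENNReal.ofReal_ne_top


section PhiGrowth
variable {φ : ℝ → ℝ} {r d : ℝ}

lemma phi_up (hA : AntitoneOn (fun t => φ t * t ^ (-r - d)) (Set.Ioi 0))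
    {u l : ℝ} (hu : 0 < u) (hl : 1 ≤ l) : φ (l * u) ≤ l ^ (r + d) * φ u := by
  have hl0 : (0:ℝ) < l := lt_of_lt_of_le one_pos hl
  have hlu : 0 < l * u := by positivity
  have h := hA (Set.mem_Ioi.2 hu) (Set.mem_Ioi.2 hlu) (le_mul_of_one_le_left hu.le hl)
  simp only [show -r - d = -(r + d) by ring] at h
  rw [Real.rpow_neg hu.le, Real.rpow_neg hlu.le] at h
  have hpow : (0:ℝ) < (l * u) ^ (r + d) := Real.rpow_pos_of_pos hlu _
  have hupow : (0:ℝ) < u ^ (r + d) := Real.rpow_pos_of_pos hu _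
  calc φ (l * u) = φ (l * u) * ((l * u) ^ (r + d))⁻¹ * (l * u) ^ (r + d) := by
        field_simp
    _ ≤ φ u * (u ^ (r + d))⁻¹ * (l * u) ^ (r + d) :=
        mul_le_mul_of_nonneg_right h hpow.le
    _ = l ^ (r + d) * φ u := by
        rw [Real.mul_rpow hl0.le hu.le]; field_simp

lemma phi_low (hM : MonotoneOn (fun t => φ t * t ^ (-r + d)) (Set.Ioi 0))
    {u l : ℝ} (hu : 0 < u) (hl : 1 ≤ l) : l ^ (r - d) * φ u ≤ φ (l * u) := by
  have hl0 : (0:ℝ) < l := lt_of_lt_of_le one_pos hl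
  have hlu : 0 < l * u := by positivity
  have h := hM (Set.mem_Ioi.2 hu) (Set.mem_Ioi.2 hlu) (le_mul_of_one_le_left hu.le hl)
  simp only [show -r + d = -(r - d) by ring] at h
  rw [Real.rpow_neg hu.le, Real.rpow_neg hlu.le] at h
  have hpow : (0:ℝ) < (l * u) ^ (r - d) := Real.rpow_pos_of_pos hlu _
  have hupow : (0:ℝ) < u ^ (r - d) := Real.rpow_pos_of_pos hu _
  calc l ^ (r - d) * φ u = φ u * (u ^ (r - d))⁻¹ * (l * u) ^ (r - d) := by
        rw [Real.mul_rpow hl0.le hu.le]; field_simp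
    _ ≤ φ (l * u) * ((l * u) ^ (r - d))⁻¹ * (l * u) ^ (r - d) :=
        mul_le_mul_of_nonneg_right h hpow.le
    _ = φ (l * u) := by field_simp

lemma phi_shrink (hM : MonotoneOn (fun t => φ t * t ^ (-r + d)) (Set.Ioi 0))
    {u m : ℝ} (hu : 0 < u) (hm : 0 < m) (hm1 : m ≤ 1) :
    φ (m * u) ≤ m ^ (r - d) * φ u := by
  have hmu : 0 < m * u := by positivity
  have h := phi_low hM (u := m * u) (l := m⁻¹) hmu (one_le_inv_iff₀.2 ⟨hm, hm1⟩)
  rw [show m⁻¹ * (m * u) = u by field_simp] at h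
  rw [Real.inv_rpow hm.le] at h
  have hpow : (0:ℝ) < m ^ (r - d) := Real.rpow_pos_of_pos hm _
  calc φ (m * u) = m ^ (r - d) * ((m ^ (r - d))⁻¹ * φ (m * u)) := by field_simp
    _ ≤ m ^ (r - d) * φ u := mul_le_mul_of_nonneg_left h hpow.le
end PhiGrowth


lemma sigma_le_candidate {n : ℕ} (hn : 0 < n) (pp : Fin n → ℝ) (φ : Fin n → ℝ → ℝ)
    (hφpos : ∀ j t, 0 < t → 0 < φ j t)
    {y : ℝ} (hy : 0 < y) (dcand : Fin n → ℝ) (hd : ∀ i, 0 < dcand i)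
    (hprodc : ∏ i, dcand i = y) :
    sigmaFn pp φ y ≤ ⨆ i, y ^ (-(pp i)⁻¹) * φ i (dcand i) := by
  haveI : Nonempty (Fin n) := Fin.pos_iff_nonempty.1 hn
  apply csInf_le
  · refine ⟨0, fun a ha => ?_⟩
    obtain ⟨dd, hdd, -, rfl⟩ := ha
    exact Real.iSup_nonneg fun i => mul_nonneg (Real.rpow_nonneg hy.le _) (hφpos i _ (hdd i)).le
  · exact ⟨dcand, hd, hprodc, rfl⟩

section Sigma

variable {n : ℕ} (hn : 0 < n) (pp rr β : Fin n → ℝ) (d c₀ : ℝ)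
  (hrr : ∀ j, 0 < rr j) (hd : 0 ≤ d)
  (hβpos : ∀ j, 0 < β j) (hβsum : ∑ j, β j = 1)
  (hc₀ : ∀ j, β j * rr j - (pp j)⁻¹ = c₀)
  (φ : Fin n → ℝ → ℝ)
  (hφpos : ∀ j t, 0 < t → 0 < φ j t)
  (hMono : ∀ j, MonotoneOn (fun t => φ j t * t ^ (-(rr j) + d)) (Set.Ioi 0))
  (hAnti : ∀ j, AntitoneOn (fun t => φ j t * t ^ (-(rr j) - d)) (Set.Ioi 0))
  (δfun : Fin n → ℝ → ℝ)
  (hδpos : ∀ j t, 0 < t → 0 < δfun j t)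
  (hprod : ∀ t, 0 < t → (∏ j, δfun j t) = t)
  (hσ : ∀ j t, 0 < t → sigmaFn pp φ t = t ^ (-(pp j)⁻¹) * φ j (δfun j t))

include hn hrr hd hβpos hβsum hc₀ hφpos hMono hAnti hδpos hprod hσ

lemma hbeta_le_one : ∀ j, β j ≤ 1 := by
  intro j
  rw [← hβsum]
  exact Finset.single_le_sum (fun i _ => (hβpos i).le) (Finset.mem_univ j)

lemma sigma_upper {t s : ℝ} (ht : 0 < t) (hts : t ≤ s) :
    sigmaFn pp φ s ≤ sigmaFn pp φ t * (s / t) ^ (c₀ + d) := by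
  haveI : Nonempty (Fin n) := Fin.pos_iff_nonempty.1 hn
  have hs : 0 < s := lt_of_lt_of_le ht hts
  set q : ℝ := s / t with hqdef
  have hq1 : 1 ≤ q := (one_le_div ht).2 hts
  have hq0 : 0 < q := lt_of_lt_of_le one_pos hq1
  have hcand : ∀ i, 0 < q ^ β i * δfun i t := fun i => by
    have := hδpos i t ht
    have : (0:ℝ) < q ^ β i := Real.rpow_pos_of_pos hq0 _
    positivity
  have hprodc : ∏ i, q ^ β i * δfun i t = s := by
    rw [Finset.prod_mul_distrib, ← Real.rpow_sum_of_pos hq0, hβsum, Real.rpow_one,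
      hprod t ht, hqdef]
    field_simp
  refine le_trans (sigma_le_candidate hn pp φ hφpos hs _ hcand hprodc) ?_
  refine ciSup_le fun i => ?_
  have hδi := hδpos i t ht
  have hup := phi_up (hAnti i) hδi (Real.one_le_rpow hq1 (hβpos i).le)
  have hσt : (0:ℝ) < sigmaFn pp φ t := by
    rw [hσ i t ht]
    exact mul_pos (Real.rpow_pos_of_pos ht _) (hφpos i _ hδi)
  have hterm : s ^ (-(pp i)⁻¹) * φ i (q ^ β i * δfun i t) ≤
      sigmaFn pp φ t * q ^ (c₀ + β i * d) := by
    calc s ^ (-(pp i)⁻¹) * φ i (q ^ β i * δfun i t)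
        ≤ s ^ (-(pp i)⁻¹) * ((q ^ β i) ^ (rr i + d) * φ i (δfun i t)) :=
          mul_le_mul_of_nonneg_left hup (Real.rpow_nonneg hs.le _)
      _ = sigmaFn pp φ t * q ^ (c₀ + β i * d) := by
          rw [hσ i t ht, show s = t * q from by rw [hqdef]; field_simp,
            Real.mul_rpow ht.le hq0.le, ← Real.rpow_mul hq0.le,
            show t ^ (-(pp i)⁻¹) * q ^ (-(pp i)⁻¹) * ((q ^ (β i * (rr i + d))) * φ i (δfun i t))
              = t ^ (-(pp i)⁻¹) * φ i (δfun i t) * (q ^ (-(pp i)⁻¹) * q ^ (β i * (rr i + d)))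
              from by ring,
            ← Real.rpow_add hq0,
            show -(pp i)⁻¹ + β i * (rr i + d) = c₀ + β i * d from by rw [← hc₀ i]; ring]
  refine le_trans hterm (mul_le_mul_of_nonneg_left ?_ hσt.le)
  apply Real.rpow_le_rpow_of_exponent_le hq1
  have := hbeta_le_one hn pp rr β d c₀ hrr hd hβpos hβsum hc₀ φ hφpos hMono hAnti δfun hδpos hprod hσ i
  nlinarith

lemma sigma_lower {t s : ℝ} (ht : 0 < t) (hts : t ≤ s) :
    sigmaFn pp φ t * (s / t) ^ (c₀ - d) ≤ sigmaFn pp φ s := by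
  haveI : Nonempty (Fin n) := Fin.pos_iff_nonempty.1 hn
  have hs : 0 < s := lt_of_lt_of_le ht hts
  set m : ℝ := t / s with hmdef
  have hm0 : 0 < m := by positivity
  have hm1 : m ≤ 1 := (div_le_one hs).2 hts
  have hcand : ∀ i, 0 < m ^ β i * δfun i s := fun i => by
    have := hδpos i s hs
    have : (0:ℝ) < m ^ β i := Real.rpow_pos_of_pos hm0 _
    positivity
  have hprodc : ∏ i, m ^ β i * δfun i s = t := by
    rw [Finset.prod_mul_distrib, ← Real.rpow_sum_of_pos hm0, hβsum, Real.rpow_one,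
      hprod s hs, hmdef]
    field_simp
  have hkey : sigmaFn pp φ t ≤ sigmaFn pp φ s * m ^ (c₀ - d) := by
    refine le_trans (sigma_le_candidate hn pp φ hφpos ht _ hcand hprodc) ?_
    refine ciSup_le fun i => ?_
    have hδi := hδpos i s hs
    have hmb1 : m ^ β i ≤ 1 := Real.rpow_le_one hm0.le hm1 (hβpos i).le
    have hmb0 : (0:ℝ) < m ^ β i := Real.rpow_pos_of_pos hm0 _
    have hup := phi_shrink (hMono i) hδi hmb0 hmb1
    have hσs : (0:ℝ) < sigmaFn pp φ s := by
      rw [hσ i s hs]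
      exact mul_pos (Real.rpow_pos_of_pos hs _) (hφpos i _ hδi)
    have hterm : t ^ (-(pp i)⁻¹) * φ i (m ^ β i * δfun i s) ≤
        sigmaFn pp φ s * m ^ (c₀ - β i * d) := by
      calc t ^ (-(pp i)⁻¹) * φ i (m ^ β i * δfun i s)
          ≤ t ^ (-(pp i)⁻¹) * ((m ^ β i) ^ (rr i - d) * φ i (δfun i s)) :=
            mul_le_mul_of_nonneg_left hup (Real.rpow_nonneg ht.le _)
        _ = sigmaFn pp φ s * m ^ (c₀ - β i * d) := by
            rw [hσ i s hs, show t = s * m from by rw [hmdef]; field_simp,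
              Real.mul_rpow hs.le hm0.le, ← Real.rpow_mul hm0.le,
              show s ^ (-(pp i)⁻¹) * m ^ (-(pp i)⁻¹) * ((m ^ (β i * (rr i - d))) * φ i (δfun i s))
                = s ^ (-(pp i)⁻¹) * φ i (δfun i s) * (m ^ (-(pp i)⁻¹) * m ^ (β i * (rr i - d)))
                from by ring,
              ← Real.rpow_add hm0,
              show -(pp i)⁻¹ + β i * (rr i - d) = c₀ - β i * d from by rw [← hc₀ i]; ring]
    refine le_trans hterm (mul_le_mul_of_nonneg_left ?_ hσs.le)
    apply Real.rpow_le_rpow_of_exponent_ge hm0 hm1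
    have := hbeta_le_one hn pp rr β d c₀ hrr hd hβpos hβsum hc₀ φ hφpos hMono hAnti δfun hδpos hprod hσ i
    nlinarith
  have hminv : m ^ (c₀ - d) * (s/t) ^ (c₀ - d) = 1 := by
    rw [← Real.mul_rpow hm0.le (by positivity), hmdef,
      show t / s * (s / t) = 1 from by field_simp, Real.one_rpow]
  calc sigmaFn pp φ t * (s/t) ^ (c₀ - d)
      ≤ (sigmaFn pp φ s * m ^ (c₀ - d)) * (s/t) ^ (c₀ - d) :=
        mul_le_mul_of_nonneg_right hkey (Real.rpow_nonneg (by positivity) _)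
    _ = sigmaFn pp φ s := by rw [mul_assoc, hminv, mul_one]

lemma phi_delta_ratio {t s : ℝ} (ht : 0 < t) (hts : t ≤ s) (j : Fin n) :
    φ j (δfun j t) * (s / t) ^ (β j * rr j - d) ≤ φ j (δfun j s) := by
  have hs : 0 < s := lt_of_lt_of_le ht hts
  have hq0 : (0:ℝ) < s / t := by positivity
  have hlow := sigma_lower hn pp rr β d c₀ hrr hd hβpos hβsum hc₀ φ hφpos hMono hAnti δfun hδpos hprod hσ ht hts
  rw [hσ j t ht, hσ j s hs] at hlow
  -- hlow : t^e φ(δ t) * (s/t)^(c₀-d) ≤ s^e φ(δ s), e = -(pp j)⁻¹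
  have hspow : s ^ (-(pp j)⁻¹) = t ^ (-(pp j)⁻¹) * (s/t) ^ (-(pp j)⁻¹) := by
    rw [show s = t * (s/t) from by field_simp, Real.mul_rpow ht.le hq0.le]
    congr 2
    field_simp
  rw [hspow] at hlow
  have htp : (0:ℝ) < t ^ (-(pp j)⁻¹) := Real.rpow_pos_of_pos ht _
  have hqp : (0:ℝ) < (s/t) ^ (-(pp j)⁻¹) := Real.rpow_pos_of_pos hq0 _
  -- divide both sides by t^e and move (s/t)^e
  have h1 : φ j (δfun j t) * (s/t) ^ (c₀ - d) ≤ (s/t) ^ (-(pp j)⁻¹) * φ j (δfun j s) := by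
    have hlow2 : t ^ (-(pp j)⁻¹) * (φ j (δfun j t) * (s/t) ^ (c₀ - d)) ≤
        t ^ (-(pp j)⁻¹) * ((s/t) ^ (-(pp j)⁻¹) * φ j (δfun j s)) := by
      calc t ^ (-(pp j)⁻¹) * (φ j (δfun j t) * (s/t) ^ (c₀ - d))
          = t ^ (-(pp j)⁻¹) * φ j (δfun j t) * (s/t) ^ (c₀ - d) := by ring
        _ ≤ t ^ (-(pp j)⁻¹) * (s/t) ^ (-(pp j)⁻¹) * φ j (δfun j s) := hlow
        _ = t ^ (-(pp j)⁻¹) * ((s/t) ^ (-(pp j)⁻¹) * φ j (δfun j s)) := by ring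
    exact le_of_mul_le_mul_left hlow2 htp
  have h2 : φ j (δfun j t) * ((s/t) ^ (c₀ - d) * ((s/t) ^ (-(pp j)⁻¹))⁻¹) ≤ φ j (δfun j s) := by
    have h3 := mul_le_mul_of_nonneg_right h1 (le_of_lt (inv_pos.2 hqp))
    calc φ j (δfun j t) * ((s/t) ^ (c₀ - d) * ((s/t) ^ (-(pp j)⁻¹))⁻¹)
        = φ j (δfun j t) * (s/t) ^ (c₀ - d) * ((s/t) ^ (-(pp j)⁻¹))⁻¹ := by ring
      _ ≤ (s/t) ^ (-(pp j)⁻¹) * φ j (δfun j s) * ((s/t) ^ (-(pp j)⁻¹))⁻¹ := h3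
      _ = φ j (δfun j s) := by field_simp
  have hexp : (s/t) ^ (c₀ - d) * ((s/t) ^ (-(pp j)⁻¹))⁻¹ = (s/t) ^ (β j * rr j - d) := by
    rw [← Real.rpow_neg hq0.le, ← Real.rpow_add hq0]
    congr 1
    rw [← hc₀ j]
    ring
  rwa [hexp] at h2

lemma delta_ratio {t s : ℝ} (ht : 0 < t) (hts : t ≤ s) (j : Fin n)
    (hφmono : StrictMonoOn (φ j) (Set.Ioi 0))
    (hA : 0 < β j * rr j - d) :
    δfun j t * (s / t) ^ ((β j * rr j - d) / (rr j + d)) ≤ δfun j s := by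
  have hs : 0 < s := lt_of_lt_of_le ht hts
  have hq0 : (0:ℝ) < s / t := by positivity
  have hq1 : (1:ℝ) ≤ s / t := (one_le_div ht).2 hts
  have hδt := hδpos j t ht
  have hδs := hδpos j s hs
  have hratio := phi_delta_ratio hn pp rr β d c₀ hrr hd hβpos hβsum hc₀ φ hφpos hMono hAnti δfun hδpos hprod hσ ht hts j
  -- first: δfun j t ≤ δfun j s
  have hmono : δfun j t ≤ δfun j s := by
    by_contra hcon
    push_neg at hcon
    have h1 : φ j (δfun j s) < φ j (δfun j t) := hφmono (Set.mem_Ioi.2 hδs) (Set.mem_Ioi.2 hδt) hcon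
    have h2 : (1:ℝ) ≤ (s/t) ^ (β j * rr j - d) := Real.one_le_rpow hq1 hA.le
    nlinarith [hφpos j _ hδt, hφpos j _ hδs]
  -- write δfun j s = l * δfun j t
  set l : ℝ := δfun j s / δfun j t with hldef
  have hl1 : 1 ≤ l := (one_le_div hδt).2 hmono
  have hls : δfun j s = l * δfun j t := by rw [hldef]; field_simp
  have hup := phi_up (hAnti j) hδt hl1
  rw [← hls] at hup
  -- (s/t)^(βr-d) ≤ l^(r+d)
  have hstep : (s/t) ^ (β j * rr j - d) ≤ l ^ (rr j + d) := by
    have h3 : φ j (δfun j t) * (s/t) ^ (β j * rr j - d) ≤ l ^ (rr j + d) * φ j (δfun j t) :=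
      le_trans hratio hup
    have := hφpos j _ hδt
    nlinarith
  have hrd : (0:ℝ) < rr j + d := by have := hrr j; linarith
  have hfinal : (s/t) ^ ((β j * rr j - d) / (rr j + d)) ≤ l := by
    have := Real.rpow_le_rpow (Real.rpow_nonneg hq0.le _) hstep (le_of_lt (show (0:ℝ) < (rr j + d)⁻¹ from by positivity))
    rwa [← Real.rpow_mul hq0.le, ← Real.rpow_mul (le_of_lt (lt_of_lt_of_le one_pos hl1)),
      mul_inv_cancel₀ (ne_of_gt hrd), Real.rpow_one,
      show (β j * rr j - d) * (rr j + d)⁻¹ = (β j * rr j - d) / (rr j + d) from by ring] at this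
  calc δfun j t * (s/t) ^ ((β j * rr j - d) / (rr j + d)) ≤ δfun j t * l :=
        mul_le_mul_of_nonneg_left hfinal hδt.le
    _ = δfun j s := by rw [hldef]; field_simp

end Sigma

lemma deriv_lower_of_ratio (f : ℝ → ℝ) (a : ℝ)
    (hpos : ∀ t, 0 < t → 0 < f t)
    (hcd : ContDiffOn ℝ 1 f (Set.Ioi 0))
    (hratio : ∀ t s : ℝ, 0 < t → t ≤ s → f t * (s/t) ^ a ≤ f s)
    {t : ℝ} (ht : 0 < t) : a * f t / t ≤ deriv f t := by
  have hdf : HasDerivAt f (deriv f t) t :=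
    ((hcd.differentiableOn one_ne_zero).differentiableAt (Ioi_mem_nhds ht)).hasDerivAt
  have hdiv : HasDerivAt (fun s : ℝ => s / t) (1 / t) t := (hasDerivAt_id t).div_const t
  have hrpow : HasDerivAt (fun s : ℝ => (s / t) ^ a) (1 / t * a * (t / t) ^ (a - 1)) t :=
    hdiv.rpow_const (Or.inl (by rw [div_self (ne_of_gt ht)]; norm_num))
  have hψ : HasDerivAt (fun s : ℝ => f t * (s / t) ^ a) (f t * (a / t)) t := by
    have := hrpow.const_mul (f t)
    rwa [div_self (ne_of_gt ht), Real.one_rpow, mul_one,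
      show f t * (1 / t * a) = f t * (a / t) from by ring] at this
  have h1 : Filter.Tendsto (slope f t) (nhdsWithin t (Set.Ioi t)) (nhds (deriv f t)) :=
    (hasDerivAt_iff_tendsto_slope.1 hdf).mono_left
      (nhdsWithin_mono t (fun x hx => by simp [ne_of_gt (Set.mem_Ioi.1 hx)]))
  have h2 : Filter.Tendsto (slope (fun s : ℝ => f t * (s / t) ^ a) t)
      (nhdsWithin t (Set.Ioi t)) (nhds (f t * (a / t))) :=
    (hasDerivAt_iff_tendsto_slope.1 hψ).mono_left
      (nhdsWithin_mono t (fun x hx => by simp [ne_of_gt (Set.mem_Ioi.1 hx)]))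
  have hle : ∀ᶠ s in nhdsWithin t (Set.Ioi t),
      slope (fun s : ℝ => f t * (s / t) ^ a) t s ≤ slope f t s := by
    filter_upwards [self_mem_nhdsWithin] with s hs
    have hst : t < s := hs
    rw [slope_def_field, slope_def_field]
    rw [div_le_div_iff₀ (by linarith) (by linarith)]
    have hr := hratio t s ht (le_of_lt hst)
    have h0 : (t / t : ℝ) ^ a = 1 := by rw [div_self (ne_of_gt ht), Real.one_rpow]
    rw [h0]
    nlinarith [hpos t ht]
  have := le_of_tendsto_of_tendsto h2 h1 hle
  calc a * f t / t = f t * (a / t) := by ring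
    _ ≤ deriv f t := this


/-- Lemma 3(iv): the `𝓛^{θ_j}` norm of `δ_j(t)^{-r_j} φ_j(δ_j(t))` is
controlled by that of `t^{-r_j} φ_j(t)`. -/
theorem stmt5 (n : ℕ) (hn : 0 < n) (rr pp : Fin n → ℝ) (θθ : Fin n → ℝ≥0∞)
    (hrr : ∀ j, 0 < rr j) (hpp : ∀ j, 1 ≤ pp j) (hθθ : ∀ j, 1 ≤ θθ j)
    (r p : ℝ) (θ : ℝ≥0∞) (β : Fin n → ℝ)
    (hrdef : r = (n : ℝ) / ∑ j, (rr j)⁻¹)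
    (hpdef : p = ((n : ℝ) / r) / ∑ j, (pp j * rr j)⁻¹)
    (hθdef : θ = (ENNReal.ofReal ((r / n) * ∑ j, ((θθ j)⁻¹).toReal / rr j))⁻¹)
    (hβdef : ∀ j, β j = (rr j)⁻¹ * (r / n + (pp j)⁻¹ - p⁻¹))
    (hβ : ∀ j, 0 < β j)
    (δ : ℝ) (hδ : 0 < δ) (hδ' : δ ≤ (1 / 2) * ⨅ j, β j * rr j) :
    ∃ c : ℝ, 0 < c ∧
      ∀ φ : Fin n → ℝ → ℝ,
      (∀ j t, 0 < t → 0 < φ j t) →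
      (∀ j, StrictMonoOn (φ j) (Set.Ioi 0)) →
      (∀ j, ContDiffOn ℝ 1 (φ j) (Set.Ioi 0)) →
      (∀ j, calL (θθ j) (fun t => t ^ (-(rr j)) * φ j t) < ∞) →
      (∀ j, MonotoneOn (fun t => φ j t * t ^ (-(rr j) + δ)) (Set.Ioi 0)) →
      (∀ j, AntitoneOn (fun t => φ j t * t ^ (-(rr j) - δ)) (Set.Ioi 0)) →
      ∀ δfun : Fin n → ℝ → ℝ,
      (∀ j, ContDiffOn ℝ 1 (δfun j) (Set.Ioi 0)) →
      (∀ j t, 0 < t → 0 < δfun j t) →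
      (∀ t, 0 < t → (∏ j, δfun j t) = t) →
      (∀ j t, 0 < t → sigmaFn pp φ t = t ^ (-(pp j)⁻¹) * φ j (δfun j t)) →
      ∀ j, calL (θθ j) (fun t => (δfun j t) ^ (-(rr j)) * φ j (δfun j t)) ≤
        ENNReal.ofReal c * calL (θθ j) (fun t => t ^ (-(rr j)) * φ j t) := by
  haveI hnem : Nonempty (Fin n) := Fin.pos_iff_nonempty.1 hn
  have hn0 : (0:ℝ) < n := Nat.cast_pos.2 hn
  have hsumr : 0 < ∑ j, (rr j)⁻¹ :=
    Finset.sum_pos (fun j _ => inv_pos.2 (hrr j)) Finset.univ_nonempty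
  have hr0 : 0 < r := by rw [hrdef]; positivity
  have hppos : ∀ j, 0 < pp j := fun j => lt_of_lt_of_le one_pos (hpp j)
  have hsumpr : 0 < ∑ j, (pp j * rr j)⁻¹ :=
    Finset.sum_pos (fun j _ => inv_pos.2 (mul_pos (hppos j) (hrr j))) Finset.univ_nonempty
  have hp0 : 0 < p := by rw [hpdef]; positivity
  have hsumr_eq : ∑ j, (rr j)⁻¹ = n / r := by
    rw [hrdef]; field_simp
  have hpinv : p⁻¹ = r / n * ∑ j, (pp j * rr j)⁻¹ := by
    rw [hpdef]; field_simp
  set c₀ : ℝ := r / n - p⁻¹ with hc0def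
  have hc₀ : ∀ j, β j * rr j - (pp j)⁻¹ = c₀ := by
    intro j
    rw [hβdef j, mul_right_comm, inv_mul_cancel₀ (ne_of_gt (hrr j)), one_mul, hc0def]
    ring
  have hβsum : ∑ j, β j = 1 := by
    have h1 : ∑ j, β j = ∑ j, ((r/n - p⁻¹) * (rr j)⁻¹ + (pp j * rr j)⁻¹) :=
      Finset.sum_congr rfl (fun j _ => by rw [hβdef j, mul_inv]; ring)
    rw [h1, Finset.sum_add_distrib, ← Finset.mul_sum, hsumr_eq, hpinv]
    field_simp
    ring
  have hδA : ∀ j, 0 < β j * rr j - δ := by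
    intro j
    have h1 : (⨅ i, β i * rr i) ≤ β j * rr j :=
      ciInf_le (Set.Finite.bddBelow (Set.finite_range _)) j
    have h2 : 0 < β j * rr j := mul_pos (hβ j) (hrr j)
    nlinarith
  set aE : Fin n → ℝ := fun j => (β j * rr j - δ) / (rr j + δ) with haEdef
  have haE : ∀ j, 0 < aE j := fun j => div_pos (hδA j) (by have := hrr j; linarith)
  set c : ℝ := 1 + ∑ j, ((aE j)⁻¹) ^ (1 / (θθ j).toReal) with hcdef
  have hterm_nonneg : ∀ j, 0 ≤ ((aE j)⁻¹) ^ (1 / (θθ j).toReal) :=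
    fun j => Real.rpow_nonneg (by have := haE j; positivity) _
  have hc1 : (1:ℝ) ≤ c :=
    le_add_of_nonneg_right (Finset.sum_nonneg fun j _ => hterm_nonneg j)
  refine ⟨c, lt_of_lt_of_le one_pos hc1, ?_⟩
  intro φ hφpos hφmono hφcd _hφfin hMono hAnti δfun hδcd hδpos hprodδ hσeq j
  have hratio : ∀ t s : ℝ, 0 < t → t ≤ s → δfun j t * (s/t) ^ (aE j) ≤ δfun j s :=
    fun t s ht hts =>
      delta_ratio hn pp rr β δ c₀ hrr hδ.le hβ hβsum hc₀ φ hφpos hMono hAnti δfun hδpos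
        hprodδ hσeq ht hts j (hφmono j) (hδA j)
  have hdmono : StrictMonoOn (δfun j) (Set.Ioi 0) := by
    intro t ht s hs hts
    have h1 := hratio t s ht hts.le
    have hq1 : 1 < s/t := (one_lt_div ht).2 hts
    have h2 : 1 < (s/t) ^ aE j :=
      (Real.one_lt_rpow_iff_of_pos (by positivity)).2 (Or.inl ⟨hq1, haE j⟩)
    nlinarith [hδpos j t ht]
  have himg : δfun j '' Set.Ioi 0 = Set.Ioi 0 := by
    apply Set.Subset.antisymm
    · rintro y ⟨x, hx, rfl⟩
      exact hδpos j x hx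
    · intro y hy
      have hy0 : (0:ℝ) < y := hy
      have hD1p : 0 < δfun j 1 := hδpos j 1 one_pos
      set z : ℝ := (y / δfun j 1) ^ (aE j)⁻¹ with hz
      have hz0 : 0 < z := Real.rpow_pos_of_pos (by positivity) _
      have hs1 : (1:ℝ) ≤ max 1 z := le_max_left _ _
      have ht1 : min 1 z ≤ 1 := min_le_left _ _
      have ht0 : 0 < min 1 z := lt_min one_pos hz0
      have hs0 : 0 < max 1 z := lt_of_lt_of_le one_pos hs1
      have hza : z ^ aE j = y / δfun j 1 := by
        rw [hz, ← Real.rpow_mul (by positivity), inv_mul_cancel₀ (ne_of_gt (haE j)),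
          Real.rpow_one]
      have hup : y ≤ δfun j (max 1 z) := by
        have h1 := hratio 1 (max 1 z) one_pos hs1
        rw [div_one] at h1
        have h2 : z ^ aE j ≤ (max 1 z) ^ aE j :=
          Real.rpow_le_rpow hz0.le (le_max_right _ _) (haE j).le
        rw [hza] at h2
        calc y = δfun j 1 * (y / δfun j 1) := by field_simp
          _ ≤ δfun j 1 * (max 1 z) ^ aE j := mul_le_mul_of_nonneg_left h2 hD1p.le
          _ ≤ δfun j (max 1 z) := h1
      have hdown : δfun j (min 1 z) ≤ y := by
        have h1 := hratio (min 1 z) 1 ht0 ht1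
        have h2 : (min 1 z) ^ aE j ≤ z ^ aE j :=
          Real.rpow_le_rpow ht0.le (min_le_right _ _) (haE j).le
        rw [hza] at h2
        have h3 : (1/(min 1 z)) ^ aE j * (min 1 z) ^ aE j = 1 := by
          rw [← Real.mul_rpow (by positivity) ht0.le, one_div,
            inv_mul_cancel₀ (ne_of_gt ht0), Real.one_rpow]
        calc δfun j (min 1 z)
            = δfun j (min 1 z) * (1/(min 1 z)) ^ aE j * (min 1 z) ^ aE j := by
              rw [mul_assoc, h3, mul_one]
          _ ≤ δfun j 1 * (min 1 z) ^ aE j :=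
              mul_le_mul_of_nonneg_right h1 (Real.rpow_nonneg ht0.le _)
          _ ≤ δfun j 1 * (y / δfun j 1) := mul_le_mul_of_nonneg_left h2 hD1p.le
          _ = y := by field_simp
      have hts : min 1 z ≤ max 1 z := le_trans ht1 hs1
      have hcont : ContinuousOn (δfun j) (Set.Icc (min 1 z) (max 1 z)) :=
        ((hδcd j).continuousOn).mono (fun x hx => lt_of_lt_of_le ht0 hx.1)
      obtain ⟨x, hx, hxy⟩ := intermediate_value_Icc hts hcont ⟨hdown, hup⟩
      exact ⟨x, lt_of_lt_of_le ht0 hx.1, hxy⟩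
  have hderiv : ∀ t, 0 < t → aE j * δfun j t / t ≤ deriv (δfun j) t := fun t ht =>
    deriv_lower_of_ratio (δfun j) (aE j) (hδpos j) (hδcd j) hratio ht
  set F : ℝ → ℝ≥0∞ := fun u => ENNReal.ofReal |u ^ (-(rr j)) * φ j u| with hFdef
  by_cases hinf : θθ j = ∞
  · rw [calL, calL, calLE, calLE, if_pos hinf, if_pos hinf]
    have hFcont : ContinuousOn F (Set.Ioi 0) := by
      apply ENNReal.continuous_ofReal.comp_continuousOn
      apply continuous_abs.comp_continuousOn
      apply ContinuousOn.mul _ ((hφcd j).continuousOn)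
      intro u hu
      exact (Real.continuousAt_rpow_const u _ (Or.inl (ne_of_gt hu))).continuousWithinAt
    have hbound : ∀ᵐ t ∂muLog,
        (fun t => ENNReal.ofReal |(δfun j t) ^ (-(rr j)) * φ j (δfun j t)|) t ≤
          essSup F muLog := by
      filter_upwards [muLog_ae_pos] with t ht
      exact le_essSup_muLog F hFcont (hδpos j t ht)
    refine le_trans (essSup_le_of_ae_le _ hbound) ?_
    exact le_mul_of_one_le_left (by simp) (ENNReal.one_le_ofReal.2 hc1)
  · have hθr : 0 < (θθ j).toReal := by
      refine ENNReal.toReal_pos (fun h0 => ?_) hinf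
      have h1 : (1:ℝ≥0∞) ≤ θθ j := hθθ j
      rw [h0] at h1
      simp at h1
    rw [calL, calL, calLE, calLE, if_neg hinf, if_neg hinf]
    have hcov := key_cov (δfun j) (aE j) (haE j) (hδpos j) (hδcd j) hdmono.injOn himg hderiv
      (fun u => F u ^ (θθ j).toReal)
    have hbound_c : (aE j)⁻¹ ^ (1/(θθ j).toReal) ≤ c := by
      rw [hcdef]
      have h1 : ((aE j)⁻¹) ^ (1 / (θθ j).toReal) ≤ ∑ i, ((aE i)⁻¹) ^ (1 / (θθ i).toReal) :=
        Finset.single_le_sum (fun i _ => hterm_nonneg i) (Finset.mem_univ j)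
      linarith
    calc (∫⁻ t, (ENNReal.ofReal |(δfun j t) ^ (-(rr j)) * φ j (δfun j t)|) ^ (θθ j).toReal
          ∂muLog) ^ (1/(θθ j).toReal)
        = (∫⁻ t, F (δfun j t) ^ (θθ j).toReal ∂muLog) ^ (1/(θθ j).toReal) := rfl
      _ ≤ (ENNReal.ofReal (aE j)⁻¹ * ∫⁻ u, F u ^ (θθ j).toReal ∂muLog) ^ (1/(θθ j).toReal) :=
          ENNReal.rpow_le_rpow hcov (by positivity)
      _ = ENNReal.ofReal ((aE j)⁻¹ ^ (1/(θθ j).toReal)) *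
          (∫⁻ u, F u ^ (θθ j).toReal ∂muLog) ^ (1/(θθ j).toReal) := by
          rw [ENNReal.mul_rpow_of_nonneg _ _ (by positivity),
            ENNReal.ofReal_rpow_of_pos (by have := haE j; positivity)]
      _ ≤ ENNReal.ofReal c *
          (∫⁻ u, F u ^ (θθ j).toReal ∂muLog) ^ (1/(θθ j).toReal) :=
          by gcongr ?_ * _; exact ENNReal.ofReal_le_ofReal hbound_c

end
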